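/- For even M and half-integer threshold t with 0 ≤ t ≤ M/2, the tail of the distribution p_k^{(M,1/2)} = (2k+1)²/(2^M (M+1)) · binom(M+1, M/2+k+1) satisfies Σ_{k > t} p_k^{(M,1/2)} ≤ (M+1) · exp(−2t²/(M+1)). -/

import Mathlib

open scoped Classical

/-- Chernoff/Hoeffding bound for a single binomial coefficient. -/
lemma pmf_bound (m k : ℕ) (hm : 1 ≤ m) (hk : k ≤ m) :
    (((2 * m).choose (m + k) : ℕ) : ℝ) ≤ 2 ^ (2 * m) * Real.exp (-(k : ℝ) ^ 2 / m) := by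
  have hm0 : (0 : ℝ) < m := by exact_mod_cast hm
  set L : ℝ := 2 * k / m with hL
  have hsingle : (((2 * m).choose (m + k) : ℕ) : ℝ) * Real.exp L ^ (m + k)
      ≤ (Real.exp L + 1) ^ (2 * m) := by
    rw [add_pow]
    have hmem : m + k ∈ Finset.range (2 * m + 1) := by
      simp only [Finset.mem_range]; omega
    calc (((2 * m).choose (m + k) : ℕ) : ℝ) * Real.exp L ^ (m + k)
        = Real.exp L ^ (m + k) * 1 ^ (2 * m - (m + k)) * ((2 * m).choose (m + k) : ℕ) := by
          ring
      _ ≤ _ := Finset.single_le_sum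
          (f := fun j => Real.exp L ^ j * (1 : ℝ) ^ (2 * m - j) * ((2 * m).choose j : ℕ))
          (fun i _ => by positivity) hmem
  have hcosh : Real.exp L + 1 = (2 * Real.cosh (L / 2)) * Real.exp (L / 2) := by
    rw [Real.cosh_eq]
    have h1 : Real.exp (L / 2) * Real.exp (L / 2) = Real.exp L := by
      rw [← Real.exp_add]; ring_nf
    have h2 : Real.exp (-(L / 2)) * Real.exp (L / 2) = 1 := by
      rw [← Real.exp_add]; simp
    nlinarith [h1, h2]
  have hexp1 : Real.exp L ^ (m + k) = Real.exp (L * (m + k)) := by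
    rw [← Real.exp_nat_mul]; congr 1; push_cast; ring
  have hexp2 : Real.exp (L / 2) ^ (2 * m) = Real.exp (L * m) := by
    rw [← Real.exp_nat_mul]; congr 1; push_cast; ring
  have key : (((2 * m).choose (m + k) : ℕ) : ℝ)
      ≤ (2 * Real.cosh (L / 2)) ^ (2 * m) * Real.exp (-(L * k)) := by
    have hpos : (0 : ℝ) < Real.exp (L * (m + k)) := Real.exp_pos _
    rw [hcosh, mul_pow, hexp2] at hsingle
    rw [hexp1] at hsingle
    have : (((2 * m).choose (m + k) : ℕ) : ℝ)
        ≤ (2 * Real.cosh (L / 2)) ^ (2 * m) * Real.exp (L * m) / Real.exp (L * (m + k)) := by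
      rw [le_div_iff₀ hpos]; linarith
    calc (((2 * m).choose (m + k) : ℕ) : ℝ)
        ≤ (2 * Real.cosh (L / 2)) ^ (2 * m) * Real.exp (L * m) / Real.exp (L * (m + k)) := this
      _ = (2 * Real.cosh (L / 2)) ^ (2 * m) * Real.exp (-(L * k)) := by
          rw [mul_div_assoc, ← Real.exp_sub]; congr 2; push_cast; ring
  have hcosh_le : Real.cosh (L / 2) ≤ Real.exp ((L / 2) ^ 2 / 2) :=
    Real.cosh_le_exp_half_sq _
  have hstep : (2 * Real.cosh (L / 2)) ^ (2 * m)
      ≤ (2 * Real.exp ((L / 2) ^ 2 / 2)) ^ (2 * m) := by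
    apply pow_le_pow_left₀ (by positivity) (by linarith)
  have hexp3 : (2 * Real.exp ((L / 2) ^ 2 / 2)) ^ (2 * m)
      = 2 ^ (2 * m) * Real.exp (((2 * m : ℕ) : ℝ) * ((L / 2) ^ 2 / 2)) := by
    rw [mul_pow, ← Real.exp_nat_mul]
  have hfin : ((2 * m : ℕ) : ℝ) * ((L / 2) ^ 2 / 2) - L * k = -(k : ℝ) ^ 2 / m := by
    rw [hL]; field_simp; push_cast; ring
  calc (((2 * m).choose (m + k) : ℕ) : ℝ)
      ≤ (2 * Real.cosh (L / 2)) ^ (2 * m) * Real.exp (-(L * k)) := key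
    _ ≤ (2 * Real.exp ((L / 2) ^ 2 / 2)) ^ (2 * m) * Real.exp (-(L * k)) := by
        apply mul_le_mul_of_nonneg_right hstep (Real.exp_nonneg _)
    _ = 2 ^ (2 * m) * Real.exp (-(k : ℝ) ^ 2 / m) := by
        rw [hexp3, mul_assoc, ← Real.exp_add]
        have h9 : ((2 * m : ℕ) : ℝ) * ((L / 2) ^ 2 / 2) + -(L * k) = -(k : ℝ) ^ 2 / m := by
          linarith [hfin]
        rw [h9]

/-- The key combinatorial identity. -/
lemma choose_identity (m k : ℕ) (hk : k ≤ m) :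
    (2 * (k : ℝ) + 1) * (((2 * m + 1).choose (m + k + 1) : ℕ) : ℝ) =
    (2 * (m : ℝ) + 1) *
      ((((2 * m).choose (m + k) : ℕ) : ℝ) - (((2 * m).choose (m + k + 1) : ℕ) : ℝ)) := by
  have pascal : (2 * m + 1).choose (m + k + 1)
      = (2 * m).choose (m + k) + (2 * m).choose (m + k + 1) :=
    Nat.choose_succ_succ _ _
  have hrec : (2 * m).choose (m + k + 1) * (m + k + 1) = (2 * m).choose (m + k) * (m - k) := by
    have h := Nat.choose_succ_right_eq (2 * m) (m + k)
    rwa [show 2 * m - (m + k) = m - k by omega] at h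
  have hrecR : (((2 * m).choose (m + k + 1) : ℕ) : ℝ) * ((m : ℝ) + k + 1)
      = (((2 * m).choose (m + k) : ℕ) : ℝ) * ((m : ℝ) - k) := by
    have h := congrArg (fun n : ℕ => (n : ℝ)) hrec
    push_cast [Nat.cast_sub hk] at h
    push_cast
    linarith
  rw [pascal]
  push_cast
  linear_combination 2 * hrecR

lemma choose_mono (m k : ℕ) (hk : k ≤ m) :
    (((2 * m).choose (m + k + 1) : ℕ) : ℝ) ≤ (((2 * m).choose (m + k) : ℕ) : ℝ) := by
  have h : (2 * m).choose (m + k + 1) * (m + k + 1) ≤ (2 * m).choose (m + k) * (m + k + 1) := by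
    have h := Nat.choose_succ_right_eq (2 * m) (m + k)
    rw [show 2 * m - (m + k) = m - k by omega] at h
    calc (2 * m).choose (m + k + 1) * (m + k + 1) = (2 * m).choose (m + k) * (m - k) := h
      _ ≤ (2 * m).choose (m + k) * (m + k + 1) := by
          apply Nat.mul_le_mul_left; omega
  have := Nat.le_of_mul_le_mul_right h (Nat.succ_pos (m + k))
  exact_mod_cast this

/-- Tail bound: for `M = 2m` spin-1/2 systems and any threshold `t` with
`0 ≤ t ≤ M/2`, the tail of the distribution
`p_k^{(M,1/2)} = (2k+1)²/(2^M (M+1)) · C(M+1, M/2+k+1)` satisfies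
`∑_{k > t} p_k ≤ (M+1) · exp(−2t²/(M+1))` (Hoeffding). -/
theorem qubit_distribution_tail_bound (m : ℕ) (t : ℝ) (h0 : 0 ≤ t) (h1 : t ≤ (m : ℝ)) :
    ∑ k ∈ (Finset.range (m + 1)).filter (fun k : ℕ => t < (k : ℝ)),
        (2 * (k : ℝ) + 1) ^ 2 / ((2 : ℝ) ^ (2 * m) * (2 * (m : ℝ) + 1)) *
          (((2 * m + 1).choose (m + k + 1) : ℕ) : ℝ)
      ≤ (2 * (m : ℝ) + 1) * Real.exp (-2 * t ^ 2 / (2 * (m : ℝ) + 1)) := by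
  set k0 : ℕ := Nat.floor t + 1 with hk0
  have hfilter : (Finset.range (m + 1)).filter (fun k : ℕ => t < (k : ℝ))
      = Finset.Ico k0 (m + 1) := by
    ext k
    simp only [Finset.mem_filter, Finset.mem_range, Finset.mem_Ico, hk0]
    constructor
    · rintro ⟨hkm, htk⟩
      refine ⟨?_, hkm⟩
      have : Nat.floor t < k := (Nat.floor_lt h0).mpr htk
      omega
    · rintro ⟨hk1, hkm⟩
      refine ⟨hkm, ?_⟩
      have : Nat.floor t < k := by omega
      exact (Nat.floor_lt h0).mp this
  rw [hfilter]
  by_cases hempty : m + 1 ≤ k0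
  · rw [Finset.Ico_eq_empty (by omega), Finset.sum_empty]
    positivity
  push_neg at hempty
  have hk0m : k0 ≤ m := by omega
  have hm1 : 1 ≤ m := by omega
  have hm0 : (0 : ℝ) < m := by exact_mod_cast hm1
  set c : ℕ → ℝ := fun k => (((2 * m).choose (m + k) : ℕ) : ℝ) with hc
  have h2m1 : (0 : ℝ) < 2 * (m : ℝ) + 1 := by positivity
  have hpow : (0 : ℝ) < (2 : ℝ) ^ (2 * m) := by positivity
  -- Step 1: bound the sum by the telescoping sum
  have step1 : ∑ k ∈ Finset.Ico k0 (m + 1),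
        (2 * (k : ℝ) + 1) ^ 2 / ((2 : ℝ) ^ (2 * m) * (2 * (m : ℝ) + 1)) *
          (((2 * m + 1).choose (m + k + 1) : ℕ) : ℝ)
      ≤ ∑ k ∈ Finset.Ico k0 (m + 1), (2 * (m : ℝ) + 1) * (c k - c (k + 1)) / 2 ^ (2 * m) := by
    apply Finset.sum_le_sum
    intro k hkmem
    rw [Finset.mem_Ico] at hkmem
    have hkm : k ≤ m := by omega
    have hid := choose_identity m k hkm
    have e1 : c k = (((2 * m).choose (m + k) : ℕ) : ℝ) := rfl
    have e2 : c (k + 1) = (((2 * m).choose (m + k + 1) : ℕ) : ℝ) := rfl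
    have hterm : (2 * (k : ℝ) + 1) ^ 2 / ((2 : ℝ) ^ (2 * m) * (2 * (m : ℝ) + 1)) *
          (((2 * m + 1).choose (m + k + 1) : ℕ) : ℝ)
        = (2 * (k : ℝ) + 1) * (c k - c (k + 1)) / 2 ^ (2 * m) := by
      rw [e1, e2, div_mul_eq_mul_div, div_eq_div_iff (by positivity) (by positivity)]
      linear_combination (2 * (k : ℝ) + 1) * (2 : ℝ) ^ (2 * m) * hid
    rw [hterm]
    have hmono : 0 ≤ c k - c (k + 1) := by
      rw [e1, e2]
      linarith [choose_mono m k hkm]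
    have hkle : 2 * (k : ℝ) + 1 ≤ 2 * (m : ℝ) + 1 := by
      have : (k : ℝ) ≤ m := by exact_mod_cast hkm
      linarith
    gcongr
  -- Step 2: telescoping
  have step2 : ∑ k ∈ Finset.Ico k0 (m + 1), (c k - c (k + 1)) = c k0 - c (m + 1) := by
    rw [Finset.sum_Ico_eq_sub _ (by omega : k0 ≤ m + 1),
        Finset.sum_range_sub' c, Finset.sum_range_sub' c]
    ring
  have hctop : c (m + 1) = 0 := by
    simp only [hc]
    rw [Nat.choose_eq_zero_of_lt (by omega)]
    simp
  -- combine
  have step1' : ∑ k ∈ Finset.Ico k0 (m + 1),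
        (2 * (k : ℝ) + 1) ^ 2 / ((2 : ℝ) ^ (2 * m) * (2 * (m : ℝ) + 1)) *
          (((2 * m + 1).choose (m + k + 1) : ℕ) : ℝ)
      ≤ (2 * (m : ℝ) + 1) * c k0 / 2 ^ (2 * m) := by
    calc _ ≤ ∑ k ∈ Finset.Ico k0 (m + 1), (2 * (m : ℝ) + 1) * (c k - c (k + 1)) / 2 ^ (2 * m) :=
          step1
      _ = (2 * (m : ℝ) + 1) * (∑ k ∈ Finset.Ico k0 (m + 1), (c k - c (k + 1))) / 2 ^ (2 * m) := by
          rw [Finset.mul_sum, Finset.sum_div]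
      _ = (2 * (m : ℝ) + 1) * c k0 / 2 ^ (2 * m) := by rw [step2, hctop]; ring_nf
  -- Step 3: pmf bound
  have hpmf : c k0 ≤ 2 ^ (2 * m) * Real.exp (-(k0 : ℝ) ^ 2 / m) := pmf_bound m k0 hm1 hk0m
  have hexpmono : Real.exp (-(k0 : ℝ) ^ 2 / m) ≤ Real.exp (-2 * t ^ 2 / (2 * (m : ℝ) + 1)) := by
    apply Real.exp_le_exp.mpr
    rw [div_le_div_iff₀ hm0 h2m1]
    have htk0 : t ≤ (k0 : ℝ) := by
      have : t < (k0 : ℝ) := by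
        have := Nat.lt_floor_add_one t
        push_cast [hk0]
        push_cast at this
        linarith
      linarith
    have hsq : t ^ 2 ≤ (k0 : ℝ) ^ 2 := by nlinarith [htk0, h0]
    nlinarith [hsq, sq_nonneg t, mul_nonneg (sub_nonneg.mpr hsq) hm0.le]
  calc ∑ k ∈ Finset.Ico k0 (m + 1),
        (2 * (k : ℝ) + 1) ^ 2 / ((2 : ℝ) ^ (2 * m) * (2 * (m : ℝ) + 1)) *
          (((2 * m + 1).choose (m + k + 1) : ℕ) : ℝ)
      ≤ (2 * (m : ℝ) + 1) * c k0 / 2 ^ (2 * m) := step1'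
    _ ≤ (2 * (m : ℝ) + 1) * (2 ^ (2 * m) * Real.exp (-(k0 : ℝ) ^ 2 / m)) / 2 ^ (2 * m) := by
        gcongr
    _ = (2 * (m : ℝ) + 1) * Real.exp (-(k0 : ℝ) ^ 2 / m) := by
        field_simp
    _ ≤ (2 * (m : ℝ) + 1) * Real.exp (-2 * t ^ 2 / (2 * (m : ℝ) + 1)) := by
        exact mul_le_mul_of_nonneg_left hexpmono (by linarith)
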